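/- Let W be the symmetric group S_n with simple reflections s_1,...,s_{n-1} (s_i the transposition (i, i+1)). If w ∈ S_n has full support (every reduced expression of w involves all simple reflections), s_j is the unique left descent of w, and the support of s_j·w does not contain s_j, then w = s_j s_{j-1} ⋯ s_1 s_{j+1} s_{j+2} ⋯ s_{n-1}. In particular, w is a Coxeter element of S_n. -/

import Mathlib

/-- The support of `w`: the set of simple reflection indices appearing in some
(equivalently, any) reduced word for `w`. -/
def CoxeterSystem.supp {B W : Type*} [Group W] {M : CoxeterMatrix B}
    (cs : CoxeterSystem M W) (w : W) : Set B :=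
  { i | ∃ ω : List B, cs.IsReduced ω ∧ cs.wordProd ω = w ∧ i ∈ ω }

namespace SnAux

variable {m : ℕ}

lemma apply_inv_self' {α : Type*} (f : Equiv.Perm α) (x : α) : f (f⁻¹ x) = x :=
  f.apply_symm_apply x

lemma inv_apply_self' {α : Type*} (f : Equiv.Perm α) (x : α) : f⁻¹ (f x) = x :=
  f.symm_apply_apply x

/-- inversion set -/
def Invs (w : Equiv.Perm (Fin (m+1))) : Finset (Fin (m+1) × Fin (m+1)) :=
  Finset.univ.filter (fun p => p.1 < p.2 ∧ w p.2 < w p.1)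

def Nv (w : Equiv.Perm (Fin (m+1))) : ℕ := (Invs w).card

lemma mem_invs {w : Equiv.Perm (Fin (m+1))} {p : Fin (m+1) × Fin (m+1)} :
    p ∈ Invs w ↔ p.1 < p.2 ∧ w p.2 < w p.1 := by
  simp [Invs]

lemma swap_lt_iff (i : Fin m) {x y : Fin (m+1)} (hxy : x ≠ y) :
    (Equiv.swap i.castSucc i.succ y < Equiv.swap i.castSucc i.succ x) ↔
      (if (x = i.castSucc ∧ y = i.succ) ∨ (x = i.succ ∧ y = i.castSucc) then x < y
       else y < x) := by
  have hic : (i.castSucc : Fin (m+1)).1 = i.1 := rfl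
  have his : (i.succ : Fin (m+1)).1 = i.1 + 1 := rfl
  simp only [Equiv.swap_apply_def]
  split_ifs <;>
    (simp only [Fin.lt_def, Fin.ext_iff, Fin.val_succ, Fin.coe_castSucc] at * <;> omega)

lemma invs_swap (w : Equiv.Perm (Fin (m+1))) (i : Fin m)
    (hab : w⁻¹ i.castSucc < w⁻¹ i.succ) :
    Invs (Equiv.swap i.castSucc i.succ * w) =
      insert (w⁻¹ i.castSucc, w⁻¹ i.succ) (Invs w) := by
  ext p
  obtain ⟨p1, p2⟩ := p
  simp only [mem_invs, Finset.mem_insert, Prod.mk.injEq, Equiv.Perm.mul_apply]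
  constructor
  · rintro ⟨h12, hlt⟩
    have hne : w p1 ≠ w p2 := fun h => absurd (w.injective h) (ne_of_lt h12)
    rw [swap_lt_iff i hne] at hlt
    split_ifs at hlt with hcase
    · rcases hcase with ⟨h1, h2⟩ | ⟨h1, h2⟩
      · left
        constructor
        · rw [← h1]; simp
        · rw [← h2]; simp
      · exfalso
        have e1 : p1 = w⁻¹ i.succ := by rw [← h1]; simp
        have e2 : p2 = w⁻¹ i.castSucc := by rw [← h2]; simp
        rw [e1, e2] at h12
        exact absurd (h12.trans hab) (lt_irrefl _)
    · exact Or.inr ⟨h12, hlt⟩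
  · rintro (⟨h1, h2⟩ | ⟨h12, hlt⟩)
    · subst h1; subst h2
      refine ⟨hab, ?_⟩
      simp only [SnAux.apply_inv_self', Equiv.swap_apply_left, Equiv.swap_apply_right]
      simp [Fin.lt_def]
    · refine ⟨h12, ?_⟩
      have hne : w p1 ≠ w p2 := fun h => absurd (w.injective h) (ne_of_lt h12)
      rw [swap_lt_iff i hne]
      have hc : ¬((w p1 = i.castSucc ∧ w p2 = i.succ) ∨
          (w p1 = i.succ ∧ w p2 = i.castSucc)) := by
        rintro (⟨h1, h2⟩ | ⟨h1, h2⟩)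
        · rw [h1, h2] at hlt
          have h3 : (i.succ : Fin (m+1)).1 < (i.castSucc : Fin (m+1)).1 := hlt
          simp only [Fin.val_succ, Fin.coe_castSucc] at h3
          omega
        · have e1 : p1 = w⁻¹ i.succ := by rw [← h1]; simp
          have e2 : p2 = w⁻¹ i.castSucc := by rw [← h2]; simp
          rw [e1, e2] at h12
          exact absurd (h12.trans hab) (lt_irrefl _)
      rw [if_neg hc]
      exact hlt

lemma notmem_invs (w : Equiv.Perm (Fin (m+1))) (i : Fin m) :
    (w⁻¹ i.castSucc, w⁻¹ i.succ) ∉ Invs w := by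
  simp only [mem_invs, SnAux.apply_inv_self', not_and]
  intro _
  simp [Fin.lt_def]

lemma nv_swap_up (w : Equiv.Perm (Fin (m+1))) (i : Fin m)
    (hab : w⁻¹ i.castSucc < w⁻¹ i.succ) :
    Nv (Equiv.swap i.castSucc i.succ * w) = Nv w + 1 := by
  rw [Nv, invs_swap w i hab, Finset.card_insert_of_notMem (notmem_invs w i)]
  rfl

lemma nv_swap_down (w : Equiv.Perm (Fin (m+1))) (i : Fin m)
    (hab : w⁻¹ i.succ < w⁻¹ i.castSucc) :
    Nv w = Nv (Equiv.swap i.castSucc i.succ * w) + 1 := by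
  have key := nv_swap_up (Equiv.swap i.castSucc i.succ * w) i ?_
  · rw [← mul_assoc, Equiv.swap_mul_self, one_mul] at key
    exact key
  · have : (Equiv.swap i.castSucc i.succ * w)⁻¹ =
        w⁻¹ * Equiv.swap i.castSucc i.succ := by
      rw [mul_inv_rev, Equiv.swap_inv]
    rw [this]
    simp only [Equiv.Perm.mul_apply, Equiv.swap_apply_left, Equiv.swap_apply_right]
    exact hab


lemma chain (f : ℕ → ℕ) (lo hi : ℕ) (h : ∀ k, lo ≤ k → k + 1 ≤ hi → f k < f (k+1)) :
    ∀ p q, lo ≤ p → p ≤ q → q ≤ hi → f p + (q - p) ≤ f q := by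
  intro p q hlp hpq hqh
  induction q with
  | zero =>
    have hp0 : p = 0 := by omega
    subst hp0; simp
  | succ q ih =>
    by_cases hp : p = q + 1
    · subst hp; simp
    · have h1 := ih (by omega) (by omega)
      have h2 := h q (by omega) (by omega)
      omega

/-- value function on ℕ -/
def V (w : Equiv.Perm (Fin (m+1))) (k : ℕ) : ℕ :=
  if h : k < m + 1 then (w ⟨k, h⟩).1 else 0

lemma nv_one : Nv (1 : Equiv.Perm (Fin (m+1))) = 0 := by
  rw [Nv, Finset.card_eq_zero]
  ext p
  simp only [Finset.notMem_empty, iff_false]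
  intro hp
  rw [mem_invs] at hp
  simp only [Equiv.Perm.one_apply] at hp
  exact absurd (hp.1.trans hp.2) (lt_irrefl _)

lemma nv_eq_zero {w : Equiv.Perm (Fin (m+1))} (h : Nv w = 0) : w = 1 := by
  have hemp : Invs w = ∅ := Finset.card_eq_zero.mp h
  have mono : ∀ x y : Fin (m+1), x < y → w x < w y := by
    intro x y hxy
    rcases lt_trichotomy (w x) (w y) with h' | h' | h'
    · exact h'
    · exact absurd (w.injective h') (ne_of_lt hxy)
    · exfalso
      have : (x, y) ∈ Invs w := by simp [Invs, hxy, h']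
      rw [hemp] at this; simp at this
  have hc := chain (V w) 0 m (fun k _ hk => by
    have hm := mono ⟨k, by omega⟩ ⟨k+1, by omega⟩ (Fin.mk_lt_mk.mpr (by omega))
    simp only [V, dif_pos (show k < m + 1 by omega), dif_pos (show k + 1 < m + 1 by omega)]
    exact hm)
  have hval : ∀ k (hk : k ≤ m), V w k = k := by
    intro k hk
    have h1 := hc 0 k (by omega) (by omega) hk
    have h2 := hc k m (by omega) hk (le_refl m)
    have h3 : V w m ≤ m := by
      simp only [V, dif_pos (show m < m + 1 by omega)]
      exact Nat.lt_succ_iff.mp (w ⟨m, by omega⟩).2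
    omega
  ext x
  have := hval x.1 (Nat.lt_succ_iff.mp x.2)
  simp only [V, dif_pos x.2] at this
  simpa [Fin.ext_iff] using this

variable (cs : CoxeterSystem (CoxeterMatrix.Aₙ m) (Equiv.Perm (Fin (m+1))))

lemma nv_wordProd_le (hs : ∀ i : Fin m, cs.simple i = Equiv.swap i.castSucc i.succ) :
    ∀ ω : List (Fin m), Nv (cs.wordProd ω) ≤ ω.length := by
  intro ω
  induction ω with
  | nil =>
    rw [cs.wordProd_nil]
    simp [nv_one]
  | cons i ω ih =>
    rw [cs.wordProd_cons, hs i]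
    set u := cs.wordProd ω with hu
    have hne : u⁻¹ i.castSucc ≠ u⁻¹ i.succ := by
      intro h
      have := u⁻¹.injective h
      simp [Fin.ext_iff] at this
    rcases lt_or_gt_of_ne hne with h | h
    · rw [nv_swap_up u i h]; simpa using ih
    · have := nv_swap_down u i h
      simp only [List.length_cons]
      omega

lemma length_eq_nv (hs : ∀ i : Fin m, cs.simple i = Equiv.swap i.castSucc i.succ)
    (w : Equiv.Perm (Fin (m+1))) : cs.length w = Nv w := by
  have hle : ∀ w : Equiv.Perm (Fin (m+1)), Nv w ≤ cs.length w := by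
    intro w
    obtain ⟨ω, hlen, hprod⟩ := cs.exists_reduced_word w
    have hb := nv_wordProd_le cs hs ω
    subst hprod; rw [hlen.eq]
    exact hb
  have hge : ∀ n, ∀ w : Equiv.Perm (Fin (m+1)), Nv w = n → cs.length w ≤ n := by
    intro n
    induction n using Nat.strong_induction_on with
    | _ n ih =>
      intro w hw
      rcases Nat.eq_zero_or_pos n with h0 | hpos
      · subst h0
        rw [nv_eq_zero hw]
        simp [cs.length_one]
      · -- find a descent
        have hw1 : w ≠ 1 := by
          intro h; rw [h, nv_one] at hw
          omega
        have hdesc : ∃ i : Fin m, w⁻¹ i.succ < w⁻¹ i.castSucc := by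
          by_contra hno
          push_neg at hno
          apply hw1
          have mono : ∀ i : Fin m, w⁻¹ i.castSucc < w⁻¹ i.succ := by
            intro i
            rcases lt_trichotomy (w⁻¹ i.castSucc) (w⁻¹ i.succ) with h' | h' | h'
            · exact h'
            · exfalso
              have := w⁻¹.injective h'
              simp [Fin.ext_iff] at this
            · exact absurd h' (not_lt.mpr (hno i))
          -- w⁻¹ strictly increasing at consecutive indices ⟹ w⁻¹ = 1 ⟹ w = 1
          have hc := chain (V w⁻¹) 0 m (fun k _ hk => by
            have hm := mono ⟨k, by omega⟩
            simp only [V, dif_pos (show k < m + 1 by omega),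
              dif_pos (show k + 1 < m + 1 by omega)]
            exact hm)
          have hval : ∀ k (hk : k ≤ m), V w⁻¹ k = k := by
            intro k hk
            have h1 := hc 0 k (by omega) (by omega) hk
            have h2 := hc k m (by omega) hk (le_refl m)
            have h3 : V w⁻¹ m ≤ m := by
              simp only [V, dif_pos (show m < m + 1 by omega)]
              exact Nat.lt_succ_iff.mp (w⁻¹ ⟨m, by omega⟩).2
            omega
          have hinv : w⁻¹ = 1 := by
            ext x
            have := hval x.1 (Nat.lt_succ_iff.mp x.2)
            simp only [V, dif_pos x.2] at this
            simpa [Fin.ext_iff] using this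
          have := congrArg Inv.inv hinv
          simpa using this
        obtain ⟨i, hi⟩ := hdesc
        have hstep := nv_swap_down w i hi
        set w' := Equiv.swap i.castSucc i.succ * w with hw'
        have hrec : w = cs.simple i * w' := by
          rw [hw', ← mul_assoc, hs i, Equiv.swap_mul_self, one_mul]
        have h1 : cs.length w ≤ 1 + cs.length w' := by
          rw [hrec]
          have := cs.length_mul_le (cs.simple i) w'
          rwa [cs.length_simple] at this
        have h2 : cs.length w' ≤ n - 1 := ih (n-1) (by omega) w' (by omega)
        omega
  exact le_antisymm (hge (Nv w) w rfl) (hle w)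

lemma isLeftDescent_iff' (hs : ∀ i : Fin m, cs.simple i = Equiv.swap i.castSucc i.succ)
    (w : Equiv.Perm (Fin (m+1))) (i : Fin m) :
    cs.IsLeftDescent w i ↔ w⁻¹ i.succ < w⁻¹ i.castSucc := by
  unfold CoxeterSystem.IsLeftDescent
  rw [length_eq_nv cs hs, length_eq_nv cs hs, hs i]
  have hne : w⁻¹ i.castSucc ≠ w⁻¹ i.succ := by
    intro h
    have := w⁻¹.injective h
    simp [Fin.ext_iff] at this
  rcases lt_or_gt_of_ne hne with h | h
  · rw [nv_swap_up w i h]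
    constructor
    · intro hlt; omega
    · intro hlt; exact absurd (h.trans hlt) (lt_irrefl _)
  · have := nv_swap_down w i h
    constructor
    · intro _; exact h
    · intro _; omega

/-- `g` preserves the cut at `i₀` -/
def Pres (i₀ : Fin m) (g : Equiv.Perm (Fin (m+1))) : Prop :=
  ∀ x : Fin (m+1), (g x).1 ≤ i₀.1 ↔ x.1 ≤ i₀.1

lemma pres_one (i₀ : Fin m) : Pres i₀ (1 : Equiv.Perm (Fin (m+1))) := fun x => Iff.rfl

lemma pres_mul {i₀ : Fin m} {g h : Equiv.Perm (Fin (m+1))} (hg : Pres i₀ g)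
    (hh : Pres i₀ h) : Pres i₀ (g * h) := by
  intro x
  rw [Equiv.Perm.mul_apply, hg (h x), hh x]

lemma pres_inv {i₀ : Fin m} {g : Equiv.Perm (Fin (m+1))} (hg : Pres i₀ g) :
    Pres i₀ g⁻¹ := by
  intro x
  conv_rhs => rw [← SnAux.apply_inv_self' g x]
  rw [hg (g⁻¹ x)]

lemma pres_swap {k i₀ : Fin m} (h : k ≠ i₀) :
    Pres i₀ (Equiv.swap k.castSucc k.succ) := by
  intro x
  have hki : k.1 ≠ i₀.1 := fun hc => h (Fin.ext hc)
  rcases eq_or_ne x k.castSucc with rfl | h1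
  · simp only [Equiv.swap_apply_left]
    show (k.succ : Fin (m+1)).1 ≤ i₀.1 ↔ (k.castSucc : Fin (m+1)).1 ≤ i₀.1
    simp only [Fin.val_succ, Fin.coe_castSucc]
    omega
  · rcases eq_or_ne x k.succ with rfl | h2
    · simp only [Equiv.swap_apply_right]
      show (k.castSucc : Fin (m+1)).1 ≤ i₀.1 ↔ (k.succ : Fin (m+1)).1 ≤ i₀.1
      simp only [Fin.val_succ, Fin.coe_castSucc]
      omega
    · rw [Equiv.swap_apply_of_ne_of_ne h1 h2]

/-- If a word avoids letter `i₀`, its product preserves the cut. -/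
lemma pres_of_not_mem (hs : ∀ i : Fin m, cs.simple i = Equiv.swap i.castSucc i.succ)
    {i₀ : Fin m} : ∀ ω : List (Fin m), i₀ ∉ ω → Pres i₀ (cs.wordProd ω) := by
  intro ω
  induction ω with
  | nil => intro _; rw [cs.wordProd_nil]; exact pres_one i₀
  | cons k ω ih =>
    intro hmem
    rw [cs.wordProd_cons, hs k]
    exact pres_mul (pres_swap (fun hc => hmem (hc ▸ List.mem_cons_self (a := k) (l := ω))))
      (ih (fun hc => hmem (List.mem_cons_of_mem k hc)))

/-- If a reduced word's product preserves the cut at `i₀`, the word avoids `i₀`. -/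
lemma not_mem_of_pres (hs : ∀ i : Fin m, cs.simple i = Equiv.swap i.castSucc i.succ)
    {i₀ : Fin m} : ∀ ω : List (Fin m), cs.IsReduced ω → Pres i₀ (cs.wordProd ω) →
      i₀ ∉ ω := by
  intro ω
  induction ω with
  | nil => intro _ _; simp
  | cons k ω ih =>
    intro hred hpres
    set w := cs.wordProd (k :: ω) with hw
    have hω : cs.IsReduced ω := by
      have := CoxeterSystem.IsReduced.drop (ω := k :: ω) hred (j := 1)
      simpa using this
    have htail : cs.wordProd ω = cs.simple k * w := by
      rw [hw, cs.wordProd_cons, cs.simple_mul_simple_cancel_left]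
    have hdesc : cs.IsLeftDescent w k := by
      unfold CoxeterSystem.IsLeftDescent
      rw [← htail]
      have h1 : cs.length (cs.wordProd ω) ≤ ω.length := cs.length_wordProd_le ω
      have h2 : cs.length w = ω.length + 1 := by
        rw [hw, hred]
        simp
      omega
    have hki : k ≠ i₀ := by
      rintro rfl
      rw [isLeftDescent_iff' cs hs] at hdesc
      have hp := pres_inv hpres
      have ha := (hp k.castSucc).mpr (by simp)
      have hb : ¬ (w⁻¹ k.succ).1 ≤ k.1 := by
        rw [hp k.succ]
        simp
      have : (w⁻¹ k.succ).1 < (w⁻¹ k.castSucc).1 := hdesc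
      omega
    have hpres' : Pres i₀ (cs.wordProd ω) := by
      rw [htail, hs k]
      exact pres_mul (pres_swap hki) hpres
    intro hmem
    rcases List.mem_cons.mp hmem with rfl | hmem'
    · exact hki rfl
    · exact ih hω hpres' hmem'

lemma filter_le_split (c : ℕ) :
    ∀ l : List (Fin m), l.Pairwise (fun x y => x.1 < y.1) →
      l.filter (fun i => decide (i.1 ≤ c + 1)) =
        l.filter (fun i => decide (i.1 ≤ c)) ++ l.filter (fun i => decide (i.1 = c + 1)) := by
  intro l
  induction l with
  | nil => intro _; simp
  | cons a t ih =>
    intro hp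
    rw [List.pairwise_cons] at hp
    obtain ⟨ha, ht⟩ := hp
    rcases Nat.lt_trichotomy a.1 (c+1) with h | h | h
    · have h1 : a.1 ≤ c + 1 := by omega
      have h2 : a.1 ≤ c := by omega
      have h3 : ¬ a.1 = c + 1 := by omega
      simp only [List.filter_cons, h1, h2, h3]
      rw [ih ht]
      simp [h1, h2, h3]
    · -- a = c+1 : everything in t is > c+1
      have hbig : ∀ x ∈ t, c + 1 < x.1 := fun x hx => h ▸ ha x hx
      have e1 : t.filter (fun i => decide (i.1 ≤ c + 1)) = [] := by
        rw [List.filter_eq_nil_iff]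
        intro x hx
        have := hbig x hx
        simp; omega
      have e2 : t.filter (fun i => decide (i.1 ≤ c)) = [] := by
        rw [List.filter_eq_nil_iff]
        intro x hx
        have := hbig x hx
        simp; omega
      have e3 : t.filter (fun i => decide (i.1 = c + 1)) = [] := by
        rw [List.filter_eq_nil_iff]
        intro x hx
        have := hbig x hx
        simp; omega
      simp only [List.filter_cons, e1, e2, e3]
      simp [h]
    · have hbig : ∀ x ∈ t, c + 1 < x.1 := fun x hx => lt_trans h (ha x hx)
      have e1 : t.filter (fun i => decide (i.1 ≤ c + 1)) = [] := by
        rw [List.filter_eq_nil_iff]; intro x hx; have := hbig x hx; simp; omega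
      have e2 : t.filter (fun i => decide (i.1 ≤ c)) = [] := by
        rw [List.filter_eq_nil_iff]; intro x hx; have := hbig x hx; simp; omega
      have e3 : t.filter (fun i => decide (i.1 = c + 1)) = [] := by
        rw [List.filter_eq_nil_iff]; intro x hx; have := hbig x hx; simp; omega
      simp only [List.filter_cons, e1, e2, e3]
      have h1 : ¬ a.1 ≤ c + 1 := by omega
      have h2 : ¬ a.1 ≤ c := by omega
      have h3 : ¬ a.1 = c + 1 := by omega
      simp [h1, h2, h3]

lemma filter_gt_split (c : ℕ) :
    ∀ l : List (Fin m), l.Pairwise (fun x y => x.1 < y.1) →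
      l.filter (fun i => decide (c < i.1)) =
        l.filter (fun i => decide (i.1 = c + 1)) ++ l.filter (fun i => decide (c + 1 < i.1)) := by
  intro l
  induction l with
  | nil => intro _; simp
  | cons a t ih =>
    intro hp
    rw [List.pairwise_cons] at hp
    obtain ⟨ha, ht⟩ := hp
    rcases Nat.lt_trichotomy a.1 (c+1) with h | h | h
    · have h1 : ¬ c < a.1 := by omega
      have h2 : ¬ a.1 = c + 1 := by omega
      have h3 : ¬ c + 1 < a.1 := by omega
      simp only [List.filter_cons, h1, h2, h3]
      rw [ih ht]
      simp [h1, h2, h3]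
    · have hbig : ∀ x ∈ t, c + 1 < x.1 := fun x hx => h ▸ ha x hx
      have e1 : t.filter (fun i => decide (i.1 = c + 1)) = [] := by
        rw [List.filter_eq_nil_iff]; intro x hx; have := hbig x hx; simp; omega
      have he : t.filter (fun i => decide (c < i.1)) = t.filter (fun i => decide (c + 1 < i.1)) := by
        apply List.filter_congr
        intro x hx
        have := hbig x hx
        simp; omega
      simp only [List.filter_cons, e1, he]
      have h1 : c < a.1 := by omega
      have h3 : ¬ c + 1 < a.1 := by omega
      simp [h1, h, h3]
    · have h1 : c < a.1 := by omega
      have h2 : ¬ a.1 = c + 1 := by omega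
      have h3 : c + 1 < a.1 := by omega
      simp only [List.filter_cons, h1, h2, h3]
      rw [ih ht]
      have e1 : t.filter (fun i => decide (i.1 = c + 1)) = [] := by
        rw [List.filter_eq_nil_iff]
        intro x hx
        have hax := ha x hx
        simp; omega
      rw [e1] at *
      simp [h1, h2, h3, e1]

lemma filter_eq_singleton (c : ℕ) (hc : c < m) :
    (List.finRange m).filter (fun i => decide (i.1 = c)) = [⟨c, hc⟩] := by
  have : (fun (i : Fin m) => decide (i.1 = c)) = (fun i => i == (⟨c, hc⟩ : Fin m)) := by
    funext i
    rcases i with ⟨iv, hiv⟩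
    by_cases h : iv = c
    · subst h; simp
    · simp [h, Fin.ext_iff]
  rw [this, List.filter_beq]
  rw [List.count_eq_one_of_mem (List.nodup_finRange m) (List.mem_finRange _)]
  simp

lemma filter_le_zero :
    (List.finRange m).filter (fun i => decide (i.1 ≤ 0)) = (List.finRange m).filter (fun i => decide (i.1 = 0)) := by
  apply List.filter_congr
  intro x _
  simp [Nat.le_zero]


lemma pairwise_finRange : (List.finRange m).Pairwise (fun x y => x.1 < y.1) :=
  List.pairwise_lt_finRange m


/-- product of `[0, 1, ..., c]` -/
lemma prodA (hs : ∀ i : Fin m, cs.simple i = Equiv.swap i.castSucc i.succ) :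
    ∀ c : ℕ, c < m → ∀ x : Fin (m+1),
      ((cs.wordProd ((List.finRange m).filter (fun i => decide (i.1 ≤ c)))) x).1 =
        if x.1 ≤ c then x.1 + 1 else if x.1 = c + 1 then 0 else x.1 := by
  intro c
  induction c with
  | zero =>
    intro hc x
    rw [filter_le_zero, filter_eq_singleton 0 hc]
    have : cs.wordProd [(⟨0, hc⟩ : Fin m)] = cs.simple ⟨0, hc⟩ := by
      rw [cs.wordProd_cons, cs.wordProd_nil, mul_one]
    rw [this, hs ⟨0, hc⟩]
    rcases Nat.lt_trichotomy x.1 1 with h | h | h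
    · have hx : x = Fin.castSucc ⟨0, hc⟩ := by
        simp only [Fin.ext_iff, Fin.coe_castSucc, Fin.val_succ, Fin.val_zero]; omega
      rw [hx, Equiv.swap_apply_left]
      simp
    · have hx : x = Fin.succ ⟨0, hc⟩ := by
        simp only [Fin.ext_iff, Fin.coe_castSucc, Fin.val_succ, Fin.val_zero]; omega
      rw [hx, Equiv.swap_apply_right]
      simp only [Fin.coe_castSucc, Fin.val_succ, Fin.val_zero]
      norm_num
    · rw [Equiv.swap_apply_of_ne_of_ne
        (by simp only [ne_eq, Fin.ext_iff, Fin.coe_castSucc, Fin.val_zero]; omega)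
        (by simp only [ne_eq, Fin.ext_iff, Fin.val_succ, Fin.val_zero]; omega)]
      have h1 : ¬ x.1 ≤ 0 := by omega
      have h2 : ¬ x.1 = 1 := by omega
      simp [h1, h2]
  | succ c ih =>
    intro hc x
    rw [filter_le_split c (List.finRange m) pairwise_finRange,
      filter_eq_singleton (c+1) hc, cs.wordProd_append]
    have hsingle : cs.wordProd [(⟨c+1, hc⟩ : Fin m)] = cs.simple ⟨c+1, hc⟩ := by
      rw [cs.wordProd_cons, cs.wordProd_nil, mul_one]
    rw [hsingle, hs ⟨c+1, hc⟩]
    have hcm : c < m := by omega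
    set t := Equiv.swap (Fin.castSucc ⟨c+1, hc⟩) (Fin.succ ⟨c+1, hc⟩) with ht
    have hvc : (Fin.castSucc (⟨c+1, hc⟩ : Fin m)).1 = c + 1 := rfl
    have hvs : (Fin.succ (⟨c+1, hc⟩ : Fin m)).1 = c + 2 := rfl
    rw [Equiv.Perm.mul_apply]
    have hne1 : ∀ y : Fin (m+1), y.1 ≠ c + 1 → y.1 ≠ c + 2 → t y = y := by
      intro y hy1 hy2
      exact Equiv.swap_apply_of_ne_of_ne
        (by simp only [ne_eq, Fin.ext_iff, Fin.coe_castSucc]; omega)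
        (by simp only [ne_eq, Fin.ext_iff, Fin.val_succ]; omega)
    rcases Nat.lt_trichotomy x.1 (c+1) with h | h | h
    · rw [hne1 x (by omega) (by omega), ih hcm x]
      split_ifs <;> omega
    · have hx : x = Fin.castSucc ⟨c+1, hc⟩ := by
        simp only [Fin.ext_iff, Fin.coe_castSucc]; omega
      have htx : t x = Fin.succ ⟨c+1, hc⟩ := by rw [hx, ht, Equiv.swap_apply_left]
      rw [htx, ih hcm _, hvs]
      split_ifs <;> omega
    · rcases Nat.lt_trichotomy x.1 (c+2) with h' | h' | h'
      · omega
      · have hx : x = Fin.succ ⟨c+1, hc⟩ := by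
          simp only [Fin.ext_iff, Fin.val_succ]; omega
        have htx : t x = Fin.castSucc ⟨c+1, hc⟩ := by rw [hx, ht, Equiv.swap_apply_right]
        rw [htx, ih hcm _, hvc]
        split_ifs <;> omega
      · rw [hne1 x (by omega) (by omega), ih hcm x]
        split_ifs <;> omega

/-- product of `[c+1, ..., m-1]` -/
lemma prodB (hs : ∀ i : Fin m, cs.simple i = Equiv.swap i.castSucc i.succ) :
    ∀ c : ℕ, c < m → ∀ x : Fin (m+1),
      ((cs.wordProd ((List.finRange m).filter (fun i => decide (c < i.1)))) x).1 =
        if x.1 ≤ c then x.1 else if x.1 ≤ m - 1 then x.1 + 1 else c + 1 := by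
  suffices h : ∀ d c : ℕ, m - 1 - c = d → c < m → ∀ x : Fin (m+1),
      ((cs.wordProd ((List.finRange m).filter (fun i => decide (c < i.1)))) x).1 =
        if x.1 ≤ c then x.1 else if x.1 ≤ m - 1 then x.1 + 1 else c + 1 by
    intro c hc x
    exact h (m - 1 - c) c rfl hc x
  intro d
  induction d with
  | zero =>
    intro c hd hc x
    have hcm : c = m - 1 := by omega
    have hemp : (List.finRange m).filter (fun i => decide (c < i.1)) = [] := by
      rw [List.filter_eq_nil_iff]
      intro a _
      have := a.2
      simp
      omega
    rw [hemp, cs.wordProd_nil]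
    have hx := x.2
    have h1 : x.1 ≤ m := by omega
    simp only [Equiv.Perm.one_apply]
    rcases Nat.lt_trichotomy x.1 m with h | h | h
    · have : x.1 ≤ m - 1 := by omega
      by_cases h2 : x.1 ≤ c <;> simp [h2, this] <;> omega
    · have h2 : ¬ x.1 ≤ c := by omega
      have h3 : ¬ x.1 ≤ m - 1 := by omega
      simp [h2, h3]; omega
    · omega
  | succ d ih =>
    intro c hd hc x
    have hc1 : c + 1 < m := by omega
    rw [filter_gt_split c (List.finRange m) pairwise_finRange,
      filter_eq_singleton (c+1) hc1, cs.wordProd_append]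
    have hsingle : cs.wordProd [(⟨c+1, hc1⟩ : Fin m)] = cs.simple ⟨c+1, hc1⟩ := by
      rw [cs.wordProd_cons, cs.wordProd_nil, mul_one]
    rw [hsingle, hs ⟨c+1, hc1⟩, Equiv.Perm.mul_apply]
    set t := Equiv.swap (Fin.castSucc ⟨c+1, hc1⟩) (Fin.succ ⟨c+1, hc1⟩) with ht
    have hrec := ih (c+1) (by omega) hc1
    set g := cs.wordProd ((List.finRange m).filter (fun i => decide (c + 1 < i.1))) with hg
    have hvc : (Fin.castSucc (⟨c+1, hc1⟩ : Fin m)).1 = c + 1 := rfl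
    have hvs : (Fin.succ (⟨c+1, hc1⟩ : Fin m)).1 = c + 2 := rfl
    have happ : (t (g x)).1 =
        if (g x).1 = c + 1 then c + 2 else if (g x).1 = c + 2 then c + 1 else (g x).1 := by
      rcases Nat.lt_trichotomy (g x).1 (c+1) with h | h | h
      · rw [Equiv.swap_apply_of_ne_of_ne
          (by simp only [ne_eq, Fin.ext_iff, Fin.coe_castSucc]; omega)
          (by simp only [ne_eq, Fin.ext_iff, Fin.val_succ]; omega)]
        split_ifs <;> omega
      · have hgx : g x = Fin.castSucc ⟨c+1, hc1⟩ := by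
          simp only [Fin.ext_iff, Fin.coe_castSucc]; omega
        rw [hgx, Equiv.swap_apply_left, hvs, hvc]
        split_ifs <;> omega
      · rcases Nat.lt_trichotomy (g x).1 (c+2) with h' | h' | h'
        · omega
        · have hgx : g x = Fin.succ ⟨c+1, hc1⟩ := by
            simp only [Fin.ext_iff, Fin.val_succ]; omega
          rw [hgx, Equiv.swap_apply_right, hvc, hvs]
          split_ifs <;> omega
        · rw [Equiv.swap_apply_of_ne_of_ne
            (by simp only [ne_eq, Fin.ext_iff, Fin.coe_castSucc]; omega)
            (by simp only [ne_eq, Fin.ext_iff, Fin.val_succ]; omega)]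
          split_ifs <;> omega
    rw [happ, hrec x]
    have hx := x.2
    split_ifs <;> omega

/-- the main combinatorial derivation -/
lemma vformula (w : Equiv.Perm (Fin (m+1))) (j : Fin m)
    (hD : ∀ i : Fin m, w⁻¹ i.succ < w⁻¹ i.castSucc ↔ i = j)
    (hBp : ∀ y : Fin (m+1),
      ((Equiv.swap j.castSucc j.succ * w)⁻¹ y).1 ≤ j.1 ↔ y.1 ≤ j.1)
    (hF : ∀ i : Fin m, ¬ ∀ x : Fin (m+1), ((w x).1 ≤ i.1 ↔ x.1 ≤ i.1)) :
    ∀ y : Fin (m+1), (w⁻¹ y).1 =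
      if y.1 < j.1 then y.1 + 1 else if y.1 = j.1 then m
      else if y.1 = j.1 + 1 then 0 else y.1 - 1 := by
  set J := j.1 with hJdef
  have hJ : J < m := j.2
  set V : ℕ → ℕ := fun k => if h : k < m+1 then (w⁻¹ ⟨k, h⟩).1 else 0 with hV
  have hVval : ∀ k (h : k < m + 1), V k = (w⁻¹ ⟨k, h⟩).1 := by
    intro k h; simp only [hV, dif_pos h]
  have hVval' : ∀ z : Fin (m+1), (w⁻¹ z).1 = V z.1 := by
    intro z; rw [hVval z.1 z.2]
  have f0 : ∀ k, k ≤ m → V k ≤ m := by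
    intro k hk
    rw [hVval k (by omega)]
    exact Nat.lt_succ_iff.mp (w⁻¹ ⟨k, by omega⟩).2
  have f1 : ∀ p q, p ≤ m → q ≤ m → V p = V q → p = q := by
    intro p q hp hq h
    rw [hVval p (by omega), hVval q (by omega)] at h
    have := w⁻¹.injective (Fin.ext h)
    exact Fin.mk.injEq .. ▸ (by injection this)
  have f2 : ∀ k, k < m → k ≠ J → V k < V (k+1) := by
    intro k hk hkJ
    have hne : (⟨k, hk⟩ : Fin m) ≠ j := by
      intro h; exact hkJ (congrArg Fin.val h)
    have h1 : ¬ (w⁻¹ (Fin.succ ⟨k, hk⟩) < w⁻¹ (Fin.castSucc ⟨k, hk⟩)) := by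
      rw [hD]; exact hne
    have h2 : w⁻¹ (Fin.castSucc ⟨k, hk⟩) ≠ w⁻¹ (Fin.succ ⟨k, hk⟩) := by
      intro h
      have := w⁻¹.injective h
      rw [Fin.ext_iff] at this
      simp at this
    have h3 : w⁻¹ (Fin.castSucc ⟨k, hk⟩) < w⁻¹ (Fin.succ ⟨k, hk⟩) :=
      lt_of_le_of_ne (not_lt.mp h1) h2
    rw [hVval k (by omega), hVval (k+1) (by omega)]
    exact h3
  have f3 : V (J+1) < V J := by
    rw [hVval (J+1) (by omega), hVval J (by omega)]
    exact (hD j).mpr rfl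
  have hswap : ∀ k (hk : k < m + 1), k ≠ J → k ≠ J + 1 →
      Equiv.swap j.castSucc j.succ ⟨k, hk⟩ = ⟨k, hk⟩ := by
    intro k hk h1 h2
    exact Equiv.swap_apply_of_ne_of_ne
      (by simp only [ne_eq, Fin.ext_iff, Fin.coe_castSucc]; exact h1)
      (by simp only [ne_eq, Fin.ext_iff, Fin.val_succ]; exact h2)
  have hBinv : ∀ y : Fin (m+1),
      (w⁻¹ (Equiv.swap j.castSucc j.succ y)).1 ≤ J ↔ y.1 ≤ J := by
    intro y
    have := hBp y
    rwa [mul_inv_rev, Equiv.swap_inv, Equiv.Perm.mul_apply] at this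
  have b1 : ∀ k (hk : k ≤ m), k ≠ J → k ≠ J + 1 → (V k ≤ J ↔ k ≤ J) := by
    intro k hk h1 h2
    have := hBinv ⟨k, by omega⟩
    rw [hswap k (by omega) h1 h2] at this
    rwa [hVval k (by omega)]
  have b2 : V (J + 1) ≤ J := by
    have := hBinv j.castSucc
    rw [Equiv.swap_apply_left] at this
    have h2 : (w⁻¹ j.succ).1 ≤ J := this.mpr (by simp [hJdef])
    rw [hVval (J+1) (by omega)]
    exact h2
  have b3 : ¬ V J ≤ J := by
    have := hBinv j.succ
    rw [Equiv.swap_apply_right] at this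
    intro hc
    have h2 : (w⁻¹ j.castSucc).1 ≤ J := by
      rw [hVval J (by omega)] at hc
      exact hc
    have := this.mp h2
    simp [hJdef] at this
  have f5 : ∀ v, v ≤ m → ∃ k, k ≤ m ∧ V k = v := by
    intro v hv
    refine ⟨(w ⟨v, by omega⟩).1, Nat.lt_succ_iff.mp (w ⟨v, by omega⟩).2, ?_⟩
    rw [hVval _ (w ⟨v, by omega⟩).2]
    have : (⟨(w ⟨v, by omega⟩).1, (w ⟨v, by omega⟩).2⟩ : Fin (m+1)) = w ⟨v, by omega⟩ := rfl
    rw [this, SnAux.inv_apply_self']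
  -- w fixes k pointwise iff V k = k helper
  have hwfix : ∀ S : ℕ → Prop, (∀ k, k ≤ m → (S k ↔ ¬ (k ≤ m ∧ ¬ S k))) → True := fun _ _ => trivial
  -- Step A : V (J+1) = 0
  have stepA : V (J + 1) = 0 := by
    by_contra ha
    have ha' : 1 ≤ V (J + 1) := by omega
    set a := V (J + 1) with hadef
    have haJ : a ≤ J := b2
    -- fix_low : ∀ k < a, V k = k
    have fix_low : ∀ k, k < a → V k = k := by
      intro k
      induction k using Nat.strong_induction_on with
      | _ k ih =>
        intro hka
        have hkJ : k < J := by omega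
        obtain ⟨x, hxm, hxv⟩ := f5 k (by omega)
        have hxJ : x ≠ J := by
          intro h; rw [h] at hxv
          have := b3; rw [hxv] at this; omega
        have hxJ1 : x ≠ J + 1 := by
          intro h; rw [h] at hxv; omega
        have hxle : x < J := by
          rcases Nat.lt_or_ge x J with h | h
          · exact h
          · exfalso
            have hgt : x > J + 1 := by omega
            have := (b1 x hxm hxJ hxJ1).mp
            rw [hxv] at this
            have h2 := (b1 x hxm hxJ hxJ1).mpr
            -- V x = k ≤ J so x ≤ J
            have : x ≤ J := (b1 x hxm hxJ hxJ1).mp (by omega)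
            omega
        rcases Nat.lt_trichotomy x k with h | h | h
        · have := ih x (by omega) (by omega)
          omega
        · rw [← h, hxv, h]
        · -- x > k : contradiction
          exfalso
          have hchain := chain V k x (fun k' hk' hk'' => f2 k' (by omega) (by omega))
            k x (le_refl k) (by omega) (by omega)
          rcases Nat.eq_zero_or_pos k with h0 | h0
          · omega
          · have hih := ih (k-1) (by omega) (by omega)
            have hf2 := f2 (k-1) (by omega) (by omega)
            have hk1 : k - 1 + 1 = k := by omega
            rw [hk1] at hf2
            omega
    -- now w fixes {0..a-1} pointwise
    have hfix : ∀ z : Fin (m+1), z.1 < a → w⁻¹ z = z := by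
      intro z hz
      apply Fin.ext
      rw [hVval' z, fix_low z.1 hz]
    have hwfix : ∀ z : Fin (m+1), z.1 < a → w z = z := by
      intro z hz
      have h1 := congrArg w (hfix z hz)
      rw [SnAux.apply_inv_self'] at h1
      exact h1.symm
    apply hF ⟨a - 1, by omega⟩
    intro x
    simp only
    constructor
    · intro hwx
      have hfx := hfix (w x) (by omega)
      rw [SnAux.inv_apply_self'] at hfx
      have := congrArg Fin.val hfx
      omega
    · intro hx
      have h1 := hwfix x (by omega)
      rw [h1]
      omega
  -- Step B : V J = m
  have stepB : V J = m := by
    by_contra hb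
    have hbm : V J ≤ m - 1 := by
      have := f0 J (by omega); omega
    set b := V J with hbdef
    have hbJ : J + 1 ≤ b := by have := b3; omega
    have fix_high : ∀ d k, m - k = d → b < k → k ≤ m → V k = k := by
      intro d
      induction d using Nat.strong_induction_on with
      | _ d ih =>
        intro k hd hbk hkm
        obtain ⟨x, hxm, hxv⟩ := f5 k (by omega)
        have hxJ : x ≠ J := by
          intro h; rw [h] at hxv; omega
        have hxJ1 : x ≠ J + 1 := by
          intro h; rw [h, stepA] at hxv; omega
        have hxgt : J + 1 < x := by
          rcases Nat.lt_or_ge x J with h | h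
          · exfalso
            have : V x ≤ J ↔ x ≤ J := b1 x hxm hxJ hxJ1
            rw [hxv] at this
            have := this.mpr (by omega)
            omega
          · omega
        rcases Nat.lt_trichotomy x k with h | h | h
        · exfalso
          -- chain from x to k ; all steps in [J+2, m-1], ≠ J
          have hchain := chain V x k (fun k' hk' hk'' => f2 k' (by omega) (by omega))
            x k (le_refl x) (by omega) (by omega)
          rcases Nat.lt_or_ge k m with hkm' | hkm'
          · have hk1 := ih (m - (k+1)) (by omega) (k+1) (by omega) (by omega) (by omega)
            have := f2 k (by omega) (by omega)
            omega
          · have hf0 := f0 k (by omega)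
            omega
        · rw [← h, hxv, h]
        · exfalso
          have := ih (m - x) (by omega) x (by omega) (by omega) hxm
          omega
    have hfix : ∀ z : Fin (m+1), b < z.1 → w⁻¹ z = z := by
      intro z hz
      apply Fin.ext
      rw [hVval' z, fix_high (m - z.1) z.1 rfl hz (by omega)]
    have hwfix : ∀ z : Fin (m+1), b < z.1 → w z = z := by
      intro z hz
      have h1 := congrArg w (hfix z hz)
      rw [SnAux.apply_inv_self'] at h1
      exact h1.symm
    apply hF ⟨b, by omega⟩
    intro x
    simp only
    constructor
    · intro hwx
      by_contra hx
      push_neg at hx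
      have h1 := hwfix x (by omega)
      rw [h1] at hwx
      omega
    · intro hx
      by_contra hwx
      push_neg at hwx
      have hfx := hfix (w x) (by omega)
      rw [SnAux.inv_apply_self'] at hfx
      have := congrArg Fin.val hfx
      omega
  -- Step C : middle low : k < J → V k = k + 1
  have stepC : ∀ k, k < J → V k = k + 1 := by
    intro k hk
    have hlow : 1 ≤ V 0 := by
      rcases Nat.eq_zero_or_pos (V 0) with h | h
      · exfalso
        have := f1 0 (J+1) (by omega) (by omega) (by rw [h, stepA])
        omega
      · omega
    have hch1 := chain V 0 (J-1) (fun k' h1 h2 => f2 k' (by omega) (by omega))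
      0 k (by omega) (by omega) (by omega)
    have hup : V (J-1) ≤ J := by
      rcases Nat.eq_zero_or_pos J with h0 | h0
      · omega
      · have := (b1 (J-1) (by omega) (by omega) (by omega)).mpr (by omega)
        omega
    have hch2 := chain V 0 (J-1) (fun k' h1 h2 => f2 k' (by omega) (by omega))
      k (J-1) (by omega) (by omega) (by omega)
    omega
  -- Step D : middle high : J+2 ≤ k ≤ m → V k = k - 1
  have stepD : ∀ k, J + 2 ≤ k → k ≤ m → V k = k - 1 := by
    intro k hk1 hk2
    have hlow : J + 1 ≤ V (J + 2) := by
      have := (b1 (J+2) (by omega) (by omega) (by omega)).mp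
      -- V (J+2) ≤ J ↔ J+2 ≤ J : so ¬ V (J+2) ≤ J
      have h2 : ¬ V (J+2) ≤ J := fun hc => by
        have := (b1 (J+2) (by omega) (by omega) (by omega)).mp hc
        omega
      omega
    have hup : V m ≤ m - 1 := by
      have h1 := f0 m (le_refl m)
      have h2 : V m ≠ m := by
        intro h
        have := f1 m J (le_refl m) (by omega) (by rw [h, stepB])
        omega
      omega
    have hch1 := chain V (J+2) m (fun k' h1 h2 => f2 k' (by omega) (by omega))
      (J+2) k (le_refl _) (by omega) (by omega)
    have hch2 := chain V (J+2) m (fun k' h1 h2 => f2 k' (by omega) (by omega))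
      k m (by omega) (by omega) (le_refl m)
    omega
  -- assemble
  intro y
  have hy := y.2
  rw [hVval' y]
  rcases Nat.lt_trichotomy y.1 J with h | h | h
  · rw [stepC y.1 h]
    simp [h]
  · rw [h, stepB]
    have h2 : ¬ J < J := lt_irrefl J
    simp [h2, h]
  · rcases Nat.eq_or_lt_of_le h with h' | h'
    · rw [← h', stepA]
      have h1 : ¬ y.1 < J := by omega
      have h2 : ¬ y.1 = J := by omega
      have h3 : y.1 = J + 1 := by omega
      simp [h1, h2, h3]
    · rw [stepD y.1 (by omega) (by omega)]
      have h1 : ¬ y.1 < J := by omega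
      have h2 : ¬ y.1 = J := by omega
      have h3 : ¬ y.1 = J + 1 := by omega
      simp [h1, h2, h3]

end SnAux

theorem stmt_0 {m : ℕ}
    (cs : CoxeterSystem (CoxeterMatrix.Aₙ m) (Equiv.Perm (Fin (m + 1))))
    (hs : ∀ i : Fin m, cs.simple i = Equiv.swap i.castSucc i.succ)
    (w : Equiv.Perm (Fin (m + 1)))
    (hfull : cs.supp w = Set.univ)
    (j : Fin m)
    (hdesc : cs.IsLeftDescent w j)
    (huniq : ∀ i : Fin m, cs.IsLeftDescent w i → i = j)
    (hnot : j ∉ cs.supp (cs.simple j * w)) :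
    w = cs.wordProd
        (((List.finRange m).filter (fun i => decide (i.1 ≤ j.1))).reverse
          ++ (List.finRange m).filter (fun i => decide (j.1 < i.1))) ∧
      ∃ ω : List (Fin m), ω.Nodup ∧ (∀ i : Fin m, i ∈ ω) ∧ w = cs.wordProd ω := by
  classical
  have hD : ∀ i : Fin m, w⁻¹ i.succ < w⁻¹ i.castSucc ↔ i = j := by
    intro i
    constructor
    · intro h; exact huniq i ((SnAux.isLeftDescent_iff' cs hs w i).mpr h)
    · rintro rfl; exact (SnAux.isLeftDescent_iff' cs hs w i).mp hdesc
  have hBp : ∀ y : Fin (m+1), ((Equiv.swap j.castSucc j.succ * w)⁻¹ y).1 ≤ j.1 ↔ y.1 ≤ j.1 := by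
    obtain ⟨ω, hred, hprod⟩ := cs.exists_reduced_word' (cs.simple j * w)
    have hj : j ∉ ω := by
      intro hmem
      exact hnot ⟨ω, hred, hprod.symm, hmem⟩
    have hp := SnAux.pres_of_not_mem cs hs ω hj
    rw [← hprod] at hp
    have hp2 := SnAux.pres_inv hp
    rw [hs j] at hp2
    exact fun y => hp2 y
  have hF : ∀ i : Fin m, ¬ ∀ x : Fin (m+1), ((w x).1 ≤ i.1 ↔ x.1 ≤ i.1) := by
    intro i hiff
    have hmem : i ∈ cs.supp w := by rw [hfull]; trivial
    obtain ⟨ω, hred, hprod, hin⟩ := hmem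
    have hpres : SnAux.Pres i (cs.wordProd ω) := by rw [hprod]; exact hiff
    exact absurd hin (SnAux.not_mem_of_pres cs hs ω hred hpres)
  have hVf := SnAux.vformula w j hD hBp hF
  set A := (List.finRange m).filter (fun i => decide (i.1 ≤ j.1)) with hA
  set B := (List.finRange m).filter (fun i => decide (j.1 < i.1)) with hB
  have hPA := SnAux.prodA cs hs j.1 j.2
  have hPB := SnAux.prodB cs hs j.1 j.2
  have key : ∀ y : Fin (m+1), cs.wordProd A y = cs.wordProd B (w⁻¹ y) := by
    intro y
    apply Fin.ext
    rw [hPA y, hPB (w⁻¹ y), hVf y]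
    have hy := y.2
    have hJ := j.2
    split_ifs <;> omega
  have hfirst : w = cs.wordProd (A.reverse ++ B) := by
    rw [cs.wordProd_append, cs.wordProd_reverse]
    ext x
    have hkey := key (w x)
    rw [SnAux.inv_apply_self'] at hkey
    rw [Equiv.Perm.mul_apply, ← hkey, SnAux.inv_apply_self']
  refine ⟨hfirst, ⟨A.reverse ++ B, ?_, ?_, hfirst⟩⟩
  · apply List.Nodup.append
    · exact List.nodup_reverse.mpr ((List.nodup_finRange m).filter _)
    · exact (List.nodup_finRange m).filter _
    · intro a ha hb
      rw [List.mem_reverse, hA, List.mem_filter] at ha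
      rw [hB, List.mem_filter] at hb
      have h1 : a.1 ≤ j.1 := by simpa using ha.2
      have h2 : j.1 < a.1 := by simpa using hb.2
      omega
  · intro i
    rcases le_or_gt i.1 j.1 with h | h
    · apply List.mem_append_left
      rw [List.mem_reverse, hA, List.mem_filter]
      exact ⟨List.mem_finRange i, by simpa using h⟩
    · apply List.mem_append_right
      rw [hB, List.mem_filter]
      exact ⟨List.mem_finRange i, by simpa using h⟩
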